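/- Let T be a decision tree whose root is an internal node, and let T_L and T_R be the subtrees rooted at the two children of the root. Then OPT_T ≥ (OPT_{T_L} + OPT_{T_R} + sqrt((OPT_{T_L} − OPT_{T_R})² + 4)) / 2. -/
import Mathlib


/-- A deterministic decision tree over `{0,1}^n`: every internal node is labeled
by a query index `i ∈ Fin n` and has exactly two children (a 0-child and a
1-child); every leaf is labeled by an output value. -/
inductive DTree (n : ℕ) : Type where
  | leaf (b : Bool) : DTree n
  | node (i : Fin n) (t0 t1 : DTree n) : DTree n

namespace DTree

/-- On input `x`, from each internal node labeled `i` follow the edge to the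
`x i`-child; output the label of the leaf reached. -/
def eval {n : ℕ} : DTree n → (Fin n → Bool) → Bool
  | leaf b, _ => b
  | node i t0 t1, x => if x i then t1.eval x else t0.eval x

/-- `DTSize`: the total number of nodes of the tree. -/
def size {n : ℕ} : DTree n → ℕ
  | leaf _ => 1
  | node _ t0 t1 => 1 + t0.size + t1.size

/-- The depth: the maximum number of edges on a root-to-leaf path. -/
def depth {n : ℕ} : DTree n → ℕ
  | leaf _ => 0
  | node _ t0 t1 => 1 + max t0.depth t1.depth

/-- The rank of a binary tree: a leaf has rank 0; an internal node whose two
children have ranks `r₁, r₂` has rank `max r₁ r₂` if `r₁ ≠ r₂`, and `r₁ + 1`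
if `r₁ = r₂`. -/
def rank {n : ℕ} : DTree n → ℕ
  | leaf _ => 0
  | node _ t0 t1 => if t0.rank = t1.rank then t0.rank + 1 else max t0.rank t1.rank

end DTree

/-- The decision tree `t` computes the total Boolean function `f`. -/
def ComputesFn {n : ℕ} (t : DTree n) (f : (Fin n → Bool) → Bool) : Prop :=
  ∀ x, t.eval x = f x

/-- An assignment of one real weight to each edge of a binary tree, recorded as a
tree of the same shape: at every internal node, `w0` is the weight of the edge to
the 0-child and `w1` the weight of the edge to the 1-child. -/
inductive WTree : Type where
  | leaf : WTree
  | node (w0 w1 : ℝ) (c0 c1 : WTree) : WTree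

namespace WTree

/-- All weights are strictly positive. -/
def Pos : WTree → Prop
  | leaf => True
  | node w0 w1 c0 c1 => 0 < w0 ∧ 0 < w1 ∧ c0.Pos ∧ c1.Pos

/-- `max_{P ∈ P(T)} Σ_{e ∈ P} 1 / W_e`: the maximum over root-to-leaf paths `P`
of the sum of the inverse weights of the edges along `P`. -/
noncomputable def pathCost : WTree → ℝ
  | leaf => 0
  | node w0 w1 c0 c1 => max (1 / w0 + c0.pathCost) (1 / w1 + c1.pathCost)

/-- `max_{P ∈ P(T)} Σ_{e ∈ P̄} W_e`: the maximum over root-to-leaf paths `P` of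
the sum of the weights of the edges having exactly one endpoint on `P`
(i.e. at each internal node of `P`, the edge to the child off the path). -/
noncomputable def devCost : WTree → ℝ
  | leaf => 0
  | node w0 w1 c0 c1 => max (w1 + c0.devCost) (w0 + c1.devCost)

end WTree

/-- The weight assignment `w` has the same shape as the decision tree `t`
(i.e. it assigns a weight to each edge of `t`). -/
def MatchesW {n : ℕ} : DTree n → WTree → Prop
  | DTree.leaf _, WTree.leaf => True
  | DTree.node _ t0 t1, WTree.node _ _ c0 c1 => MatchesW t0 c0 ∧ MatchesW t1 c1
  | _, _ => False

/-- `OPT_T`: the infimum, over all positive weight assignments `W` to the edges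
of `T`, of `sqrt((max_{P} Σ_{e∈P̄} W_e) · (max_{P} Σ_{e∈P} 1/W_e))`.
For a single leaf this is `0`. -/
noncomputable def OPT {n : ℕ} (t : DTree n) : ℝ :=
  sInf {v : ℝ | ∃ w : WTree, MatchesW t w ∧ w.Pos ∧
    v = Real.sqrt (w.devCost * w.pathCost)}

namespace OPTAux

lemma devCost_nonneg : ∀ w : WTree, w.Pos → 0 ≤ w.devCost
  | WTree.leaf, _ => le_refl 0
  | WTree.node w0 w1 c0 c1, ⟨h0, h1, hc0, hc1⟩ => by
    have := devCost_nonneg c0 hc0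
    simp only [WTree.devCost, le_max_iff]
    left; linarith

lemma pathCost_nonneg : ∀ w : WTree, w.Pos → 0 ≤ w.pathCost
  | WTree.leaf, _ => le_refl 0
  | WTree.node w0 w1 c0 c1, ⟨h0, h1, hc0, hc1⟩ => by
    have := pathCost_nonneg c0 hc0
    have : 0 ≤ 1 / w0 := by positivity
    simp only [WTree.pathCost, le_max_iff]
    left; linarith [pathCost_nonneg c0 hc0]

/-- Unit weight assignment with the same shape as a given decision tree. -/
def unitW {n : ℕ} : DTree n → WTree
  | DTree.leaf _ => WTree.leaf
  | DTree.node _ t0 t1 => WTree.node 1 1 (unitW t0) (unitW t1)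

lemma matchesW_unitW {n : ℕ} : ∀ t : DTree n, MatchesW t (unitW t)
  | DTree.leaf _ => trivial
  | DTree.node _ t0 t1 => ⟨matchesW_unitW t0, matchesW_unitW t1⟩

lemma pos_unitW {n : ℕ} : ∀ t : DTree n, (unitW t).Pos
  | DTree.leaf _ => trivial
  | DTree.node _ t0 t1 => ⟨one_pos, one_pos, pos_unitW t0, pos_unitW t1⟩

lemma bddBelow_OPTset {n : ℕ} (t : DTree n) :
    BddBelow {v : ℝ | ∃ w : WTree, MatchesW t w ∧ w.Pos ∧
      v = Real.sqrt (w.devCost * w.pathCost)} := by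
  refine ⟨0, fun v hv => ?_⟩
  obtain ⟨w, _, _, rfl⟩ := hv
  exact Real.sqrt_nonneg _

lemma OPT_le {n : ℕ} (t : DTree n) (w : WTree) (hm : MatchesW t w) (hp : w.Pos) :
    OPT t ≤ Real.sqrt (w.devCost * w.pathCost) :=
  csInf_le (bddBelow_OPTset t) ⟨w, hm, hp, rfl⟩

lemma OPT_nonneg {n : ℕ} (t : DTree n) : 0 ≤ OPT t := by
  refine le_csInf ⟨_, ⟨unitW t, matchesW_unitW t, pos_unitW t, rfl⟩⟩ ?_
  rintro v ⟨w, _, _, rfl⟩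
  exact Real.sqrt_nonneg _

/-- Core geometric inequality: `(√(dp) - √(D₀P₀)) * (√(dp) - √(D₁P₁)) ≥ 1`. -/
lemma core (d p D0 P0 D1 P1 w0 w1 : ℝ)
    (hD0 : 0 ≤ D0) (hP0 : 0 ≤ P0) (hD1 : 0 ≤ D1) (hP1 : 0 ≤ P1)
    (hw0 : 0 < w0) (hw1 : 0 < w1)
    (hd0 : w1 + D0 ≤ d) (hd1 : w0 + D1 ≤ d)
    (hp0 : 1 / w0 + P0 ≤ p) (hp1 : 1 / w1 + P1 ≤ p) :
    Real.sqrt (D0 * P0) ≤ Real.sqrt (d * p) ∧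
    Real.sqrt (D1 * P1) ≤ Real.sqrt (d * p) ∧
    1 ≤ (Real.sqrt (d * p) - Real.sqrt (D0 * P0)) *
        (Real.sqrt (d * p) - Real.sqrt (D1 * P1)) := by
  have hd : 0 ≤ d := by linarith
  have hp : 0 ≤ p := by linarith [one_div_pos.mpr hw0]
  set V := Real.sqrt (d * p) with hVdef
  set A := Real.sqrt (D0 * P0) with hAdef
  set B := Real.sqrt (D1 * P1) with hBdef
  have hV2 : V ^ 2 = d * p := Real.sq_sqrt (by positivity)
  have hA2 : A ^ 2 = D0 * P0 := Real.sq_sqrt (by positivity)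
  have hB2 : B ^ 2 = D1 * P1 := Real.sq_sqrt (by positivity)
  have hVn : 0 ≤ V := Real.sqrt_nonneg _
  have hAn : 0 ≤ A := Real.sqrt_nonneg _
  have hBn : 0 ≤ B := Real.sqrt_nonneg _
  -- V ≥ A and V ≥ B
  have hAV : A ≤ V := by
    apply Real.sqrt_le_sqrt
    have h1 : D0 ≤ d := by linarith
    have h2 : P0 ≤ p := by linarith [one_div_pos.mpr hw0]
    exact mul_le_mul h1 h2 hP0 hd
  have hBV : B ≤ V := by
    apply Real.sqrt_le_sqrt
    have h1 : D1 ≤ d := by linarith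
    have h2 : P1 ≤ p := by linarith [one_div_pos.mpr hw1]
    exact mul_le_mul h1 h2 hP1 hd
  refine ⟨hAV, hBV, ?_⟩
  -- AM-GM: 2 * A * V ≤ D0 * p + P0 * d, so (V - A)^2 ≥ (d - D0) * (p - P0)
  have key : ∀ D P : ℝ, 0 ≤ D → 0 ≤ P →
      (V - Real.sqrt (D * P)) ^ 2 ≥ (d - D) * (p - P) := by
    intro D P hD hP
    set C := Real.sqrt (D * P) with hCdef
    have hC2 : C ^ 2 = D * P := Real.sq_sqrt (by positivity)
    set s := Real.sqrt (D * p) with hsdef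
    set t := Real.sqrt (P * d) with htdef
    have hs2 : s ^ 2 = D * p := Real.sq_sqrt (by positivity)
    have ht2 : t ^ 2 = P * d := Real.sq_sqrt (by positivity)
    have hst : C * V = s * t := by
      rw [hCdef, hVdef, hsdef, htdef, ← Real.sqrt_mul (by positivity),
        ← Real.sqrt_mul (by positivity)]
      ring_nf
    nlinarith [sq_nonneg (s - t)]
  have k0 : (V - A) ^ 2 ≥ (d - D0) * (p - P0) := key D0 P0 hD0 hP0
  have k1 : (V - B) ^ 2 ≥ (d - D1) * (p - P1) := key D1 P1 hD1 hP1
  -- cross products ≥ 1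
  have c0 : 1 ≤ (d - D0) * (p - P1) := by
    have h1 : w1 ≤ d - D0 := by linarith
    have h2 : 1 / w1 ≤ p - P1 := by linarith
    calc (1 : ℝ) = w1 * (1 / w1) := by field_simp
      _ ≤ (d - D0) * (p - P1) :=
        mul_le_mul h1 h2 (by positivity) (by linarith)
  have c1 : 1 ≤ (d - D1) * (p - P0) := by
    have h1 : w0 ≤ d - D1 := by linarith
    have h2 : 1 / w0 ≤ p - P0 := by linarith
    calc (1 : ℝ) = w0 * (1 / w0) := by field_simp
      _ ≤ (d - D1) * (p - P0) :=
        mul_le_mul h1 h2 (by positivity) (by linarith)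
  -- combine: ((V-A)(V-B))^2 ≥ 1 and (V-A)(V-B) ≥ 0
  have hprod2 : ((V - A) * (V - B)) ^ 2 ≥ 1 := by
    have e : (d - D0) * (p - P0) * ((d - D1) * (p - P1)) =
        ((d - D0) * (p - P1)) * ((d - D1) * (p - P0)) := by ring
    have hDd0 : 0 ≤ d - D0 := by linarith
    have hPp0 : 0 ≤ p - P0 := by linarith [one_div_pos.mpr hw0]
    have hDd1 : 0 ≤ d - D1 := by linarith
    have hPp1 : 0 ≤ p - P1 := by linarith [one_div_pos.mpr hw1]
    calc ((V - A) * (V - B)) ^ 2 = (V - A) ^ 2 * (V - B) ^ 2 := by ring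
      _ ≥ (d - D0) * (p - P0) * ((d - D1) * (p - P1)) := by
          exact mul_le_mul k0 k1 (mul_nonneg hDd1 hPp1) (sq_nonneg _)
      _ = ((d - D0) * (p - P1)) * ((d - D1) * (p - P0)) := e
      _ ≥ 1 * 1 := mul_le_mul c0 c1 (by norm_num) (by linarith)
      _ = 1 := by norm_num
  have hprodn : 0 ≤ (V - A) * (V - B) :=
    mul_nonneg (by linarith) (by linarith)
  nlinarith [hprod2, hprodn]

/-- From `V ≥ A ≥ aL`, `V ≥ B ≥ aR`, `(V-A)(V-B) ≥ 1`, conclude the target. -/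
lemma final_step (aL aR A B V : ℝ) (hA : aL ≤ A) (hB : aR ≤ B)
    (hVA : A ≤ V) (hVB : B ≤ V) (hprod : 1 ≤ (V - A) * (V - B)) :
    (aL + aR + Real.sqrt ((aL - aR) ^ 2 + 4)) / 2 ≤ V := by
  have h1 : 1 ≤ (V - aL) * (V - aR) := by nlinarith
  have h0 : 0 ≤ 2 * V - aL - aR := by linarith
  have hS : Real.sqrt ((aL - aR) ^ 2 + 4) ≤ 2 * V - aL - aR := by
    have hsq : (aL - aR) ^ 2 + 4 ≤ (2 * V - aL - aR) ^ 2 := by nlinarith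
    calc Real.sqrt ((aL - aR) ^ 2 + 4) ≤ Real.sqrt ((2 * V - aL - aR) ^ 2) :=
          Real.sqrt_le_sqrt hsq
      _ = 2 * V - aL - aR := Real.sqrt_sq h0
  linarith

end OPTAux

/-- Let `T` be a decision tree whose root is an internal node,
with subtrees `T_L`, `T_R` rooted at the two children of the root. Then
`OPT_T ≥ (OPT_{T_L} + OPT_{T_R} + sqrt((OPT_{T_L} − OPT_{T_R})² + 4)) / 2`. -/
theorem OPT_node_ge {n : ℕ} (i : Fin n) (tL tR : DTree n) :
    (OPT tL + OPT tR + Real.sqrt ((OPT tL - OPT tR) ^ 2 + 4)) / 2 ≤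
      OPT (DTree.node i tL tR) := by
  apply le_csInf
  · exact ⟨_, ⟨OPTAux.unitW (DTree.node i tL tR),
      OPTAux.matchesW_unitW _, OPTAux.pos_unitW _, rfl⟩⟩
  rintro v ⟨w, hm, hp, rfl⟩
  cases w with
  | leaf => exact hm.elim
  | node w0 w1 c0 c1 =>
    obtain ⟨hm0, hm1⟩ := hm
    obtain ⟨hw0, hw1, hp0, hp1⟩ := hp
    have hD0 := OPTAux.devCost_nonneg c0 hp0
    have hP0 := OPTAux.pathCost_nonneg c0 hp0
    have hD1 := OPTAux.devCost_nonneg c1 hp1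
    have hP1 := OPTAux.pathCost_nonneg c1 hp1
    set d := (WTree.node w0 w1 c0 c1).devCost with hd
    set p := (WTree.node w0 w1 c0 c1).pathCost with hpp
    have hd0 : w1 + c0.devCost ≤ d := le_max_left _ _
    have hd1 : w0 + c1.devCost ≤ d := le_max_right _ _
    have hq0 : 1 / w0 + c0.pathCost ≤ p := le_max_left _ _
    have hq1 : 1 / w1 + c1.pathCost ≤ p := le_max_right _ _
    obtain ⟨hAV, hBV, hprod⟩ := OPTAux.core d p c0.devCost c0.pathCost
      c1.devCost c1.pathCost w0 w1 hD0 hP0 hD1 hP1 hw0 hw1 hd0 hd1 hq0 hq1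
    exact OPTAux.final_step (OPT tL) (OPT tR) _ _ _
      (OPTAux.OPT_le tL c0 hm0 hp0) (OPTAux.OPT_le tR c1 hm1 hp1)
      hAV hBV hprod
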